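/- For any a ≥ 2 and any integer h with 0 ≤ h ≤ a, we have Λ(a,h) ≤ Λ(a) − (a−h); moreover if a/2 ≤ h ≤ a then equality holds, i.e. Λ(a,h) = Λ(a) − (a−h). -/

import Mathlib

set_option linter.unusedSectionVars false
set_option linter.unusedVariables false
set_option maxHeartbeats 800000


/-- `U` induces a disjoint union of chains such that any two elements belonging to different
chains are incomparable; equivalently, comparability restricted to `U` is transitive
(so the comparability graph induced on `U` is a vertex-disjoint union of cliques). -/
def IsChainUnion {α : Type*} [PartialOrder α] (U : Finset α) : Prop :=
  ∀ x ∈ U, ∀ y ∈ U, ∀ z ∈ U,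
    (x ≤ y ∨ y ≤ x) → (y ≤ z ∨ z ≤ y) → (x ≤ z ∨ z ≤ x)

/-- `ao α`: the maximum cardinality of a subset of the finite poset `α` that is a
disjoint union of chains with elements of different chains incomparable. -/
noncomputable def ao (α : Type*) [Fintype α] [PartialOrder α] : ℕ :=
  sSup {m | ∃ U : Finset α, IsChainUnion U ∧ U.card = m}

/-- The height of a finite poset: the maximum size of a chain. -/
noncomputable def heightP (α : Type*) [Fintype α] [PartialOrder α] : ℕ :=
  sSup {m | ∃ C : Finset α, IsChain (· ≤ ·) (↑C : Set α) ∧ C.card = m}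

/-- The width of a finite poset: the maximum size of an antichain. -/
noncomputable def widthP (α : Type*) [Fintype α] [PartialOrder α] : ℕ :=
  sSup {m | ∃ A : Finset α, IsAntichain (· ≤ ·) (↑A : Set α) ∧ A.card = m}

/-- The cover graph of a poset: `x` and `y` are adjacent iff one covers the other. -/
def coverGraph (α : Type*) [PartialOrder α] : SimpleGraph α where
  Adj x y := x ⋖ y ∨ y ⋖ x
  symm := ⟨fun x y h => h.symm⟩
  loopless := ⟨fun x h => by rcases h with h | h <;> exact absurd h.lt (lt_irrefl x)⟩

/-- A poset is acyclic if its cover graph has no cycles. -/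
def AcyclicPoset (α : Type*) [PartialOrder α] : Prop := (coverGraph α).IsAcyclic

/-- A poset is connected if its cover graph is connected. -/
def ConnectedPoset (α : Type*) [PartialOrder α] : Prop := (coverGraph α).Connected

/-- A poset is `N`-free if there are no `p1, p2, p3, p4` with `p1 > p3`, `p1 > p4`, `p2 > p4`,
`p1 ∦ p2`, `p2 ∦ p3`, `p3 ∦ p4`. -/
def NFree (α : Type*) [PartialOrder α] : Prop :=
  ¬ ∃ p1 p2 p3 p4 : α, p3 < p1 ∧ p4 < p1 ∧ p4 < p2 ∧
      ¬(p1 ≤ p2 ∨ p2 ≤ p1) ∧ ¬(p2 ≤ p3 ∨ p3 ≤ p2) ∧ ¬(p3 ≤ p4 ∨ p4 ≤ p3)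

/-- A poset is `V`-free if there are no `p1 < p2`, `p1 < p3` with `p2` incomparable to `p3`. -/
def VFree (α : Type*) [PartialOrder α] : Prop :=
  ¬ ∃ p1 p2 p3 : α, p1 < p2 ∧ p1 < p3 ∧ ¬(p2 ≤ p3 ∨ p3 ≤ p2)

/-- `ao` of the family `T_n` of all acyclic posets on `n` elements:
the minimum of `ao P` over acyclic posets `P` of size `n`. -/
noncomputable def aoT (n : ℕ) : ℕ :=
  sInf {m | ∃ P : PartialOrder (Fin n),
    @AcyclicPoset (Fin n) P ∧ @ao (Fin n) (Fin.fintype n) P = m}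

/-- `Λ(a, h)`: the maximum cardinality of a `V`-free poset `P` with `ao P = a` and
height at most `h`. -/
noncomputable def Lam (a h : ℕ) : ℕ :=
  sSup {n | ∃ P : PartialOrder (Fin n), @VFree (Fin n) P ∧
    @ao (Fin n) (Fin.fintype n) P = a ∧ @heightP (Fin n) (Fin.fintype n) P ≤ h}

/-- `Λ(a) = Λ(a, a)`. -/
noncomputable def Lambda (a : ℕ) : ℕ := Lam a a

/-- `X(a)`: the maximum cardinality of an acyclic and `N`-free poset `P` with `ao P = a`. -/
noncomputable def Xmax (a : ℕ) : ℕ :=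
  sSup {n | ∃ P : PartialOrder (Fin n), @AcyclicPoset (Fin n) P ∧
    @NFree (Fin n) P ∧ @ao (Fin n) (Fin.fintype n) P = a}

section Aux
variable {α : Type*} [Fintype α] [PartialOrder α]

lemma IsChainUnion.subset {U V : Finset α} (h : IsChainUnion V) (hUV : U ⊆ V) :
    IsChainUnion U := fun x hx y hy z hz => h x (hUV hx) y (hUV hy) z (hUV hz)

lemma isChainUnion_empty : IsChainUnion (∅ : Finset α) := by
  intro x hx; simp at hx

lemma IsChain.isChainUnion {C : Finset α} (h : IsChain (· ≤ ·) (↑C : Set α)) :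
    IsChainUnion C := by
  intro x hx y hy z hz _ _
  by_cases hxz : x = z
  · exact Or.inl (le_of_eq hxz)
  · exact h hx hz hxz

lemma aoSet_nonempty : {m | ∃ U : Finset α, IsChainUnion U ∧ U.card = m}.Nonempty :=
  ⟨0, ∅, isChainUnion_empty, Finset.card_empty⟩

lemma aoSet_bddAbove :
    BddAbove {m | ∃ U : Finset α, IsChainUnion U ∧ U.card = m} := by
  refine ⟨Fintype.card α, ?_⟩
  rintro m ⟨U, _, rfl⟩
  exact Finset.card_le_univ U

lemma exists_ao : ∃ U : Finset α, IsChainUnion U ∧ U.card = ao α :=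
  Nat.sSup_mem aoSet_nonempty aoSet_bddAbove

lemma card_le_ao {U : Finset α} (h : IsChainUnion U) : U.card ≤ ao α :=
  le_csSup aoSet_bddAbove ⟨U, h, rfl⟩

lemma htSet_nonempty :
    {m | ∃ C : Finset α, IsChain (· ≤ ·) (↑C : Set α) ∧ C.card = m}.Nonempty :=
  ⟨0, ∅, by simp, Finset.card_empty⟩

lemma htSet_bddAbove :
    BddAbove {m | ∃ C : Finset α, IsChain (· ≤ ·) (↑C : Set α) ∧ C.card = m} := by
  refine ⟨Fintype.card α, ?_⟩
  rintro m ⟨C, _, rfl⟩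
  exact Finset.card_le_univ C

lemma exists_heightP : ∃ C : Finset α, IsChain (· ≤ ·) (↑C : Set α) ∧ C.card = heightP α :=
  Nat.sSup_mem htSet_nonempty htSet_bddAbove

lemma card_le_heightP {C : Finset α} (h : IsChain (· ≤ ·) (↑C : Set α)) :
    C.card ≤ heightP α := le_csSup htSet_bddAbove ⟨C, h, rfl⟩

lemma heightP_le_ao : heightP α ≤ ao α := by
  obtain ⟨C, hC, hcard⟩ := exists_heightP (α := α)
  rw [← hcard]
  exact card_le_ao hC.isChainUnion

lemma heightP_le (H : ℕ) (h : ∀ C : Finset α, IsChain (· ≤ ·) (↑C : Set α) → C.card ≤ H) :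
    heightP α ≤ H := by
  apply csSup_le htSet_nonempty
  rintro m ⟨C, hC, rfl⟩
  exact h C hC

lemma ao_le (H : ℕ) (h : ∀ U : Finset α, IsChainUnion U → U.card ≤ H) : ao α ≤ H := by
  apply csSup_le aoSet_nonempty
  rintro m ⟨U, hU, rfl⟩
  exact h U hU

end Aux

section AoOn
variable {α : Type*} [Fintype α] [PartialOrder α] [DecidableEq α]

/-- `ao` restricted to a finset. -/
noncomputable def aoOn (s : Finset α) : ℕ :=
  sSup {m | ∃ U : Finset α, U ⊆ s ∧ IsChainUnion U ∧ U.card = m}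

lemma aoOnSet_nonempty (s : Finset α) :
    {m | ∃ U : Finset α, U ⊆ s ∧ IsChainUnion U ∧ U.card = m}.Nonempty :=
  ⟨0, ∅, Finset.empty_subset s, isChainUnion_empty, Finset.card_empty⟩

lemma aoOnSet_bddAbove (s : Finset α) :
    BddAbove {m | ∃ U : Finset α, U ⊆ s ∧ IsChainUnion U ∧ U.card = m} := by
  refine ⟨s.card, ?_⟩
  rintro m ⟨U, hU, _, rfl⟩
  exact Finset.card_le_card hU

lemma exists_aoOn (s : Finset α) :
    ∃ U : Finset α, U ⊆ s ∧ IsChainUnion U ∧ U.card = aoOn s :=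
  Nat.sSup_mem (aoOnSet_nonempty s) (aoOnSet_bddAbove s)

lemma card_le_aoOn {s U : Finset α} (hU : U ⊆ s) (h : IsChainUnion U) :
    U.card ≤ aoOn s := le_csSup (aoOnSet_bddAbove s) ⟨U, hU, h, rfl⟩

lemma aoOn_le {s : Finset α} (H : ℕ)
    (h : ∀ U : Finset α, U ⊆ s → IsChainUnion U → U.card ≤ H) : aoOn s ≤ H := by
  apply csSup_le (aoOnSet_nonempty s)
  rintro m ⟨U, hU, hcu, rfl⟩
  exact h U hU hcu

lemma aoOn_mono {s t : Finset α} (h : s ⊆ t) : aoOn s ≤ aoOn t := by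
  apply aoOn_le
  intro U hU hcu
  exact card_le_aoOn (hU.trans h) hcu

lemma ao_eq_aoOn_univ : ao α = aoOn (Finset.univ : Finset α) := by
  apply le_antisymm
  · apply ao_le
    intro U hU
    exact card_le_aoOn (Finset.subset_univ U) hU
  · apply aoOn_le
    intro U _ hU
    exact card_le_ao hU

/-- Additivity of `aoOn` over a fully incomparable disjoint union. -/
lemma aoOn_union_incomp {s t : Finset α} (hdis : Disjoint s t)
    (hinc : ∀ x ∈ s, ∀ y ∈ t, ¬(x ≤ y ∨ y ≤ x)) :
    aoOn (s ∪ t) = aoOn s + aoOn t := by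
  apply le_antisymm
  · apply aoOn_le
    intro U hU hcu
    have hsplit : U = (U ∩ s) ∪ (U ∩ t) := by
      ext x; simp only [Finset.mem_union, Finset.mem_inter]
      constructor
      · intro hx
        rcases Finset.mem_union.1 (hU hx) with h | h
        · exact Or.inl ⟨hx, h⟩
        · exact Or.inr ⟨hx, h⟩
      · rintro (⟨h, _⟩ | ⟨h, _⟩) <;> exact h
    have hdis2 : Disjoint (U ∩ s) (U ∩ t) :=
      hdis.mono (Finset.inter_subset_right) (Finset.inter_subset_right)
    have hcards : U.card = (U ∩ s).card + (U ∩ t).card := by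
      conv_lhs => rw [hsplit]
      exact Finset.card_union_of_disjoint hdis2
    rw [hcards]
    gcongr
    · exact card_le_aoOn Finset.inter_subset_right (hcu.subset Finset.inter_subset_left)
    · exact card_le_aoOn Finset.inter_subset_right (hcu.subset Finset.inter_subset_left)
  · obtain ⟨U, hUs, hUcu, hUcard⟩ := exists_aoOn s
    obtain ⟨V, hVt, hVcu, hVcard⟩ := exists_aoOn t
    have hdisUV : Disjoint U V := hdis.mono hUs hVt
    have hcu : IsChainUnion (U ∪ V) := by
      have key : ∀ p ∈ U ∪ V, ∀ q ∈ U ∪ V, (p ≤ q ∨ q ≤ p) →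
          ((p ∈ U ∧ q ∈ U) ∨ (p ∈ V ∧ q ∈ V)) := by
        intro p hp q hq hpq
        rcases Finset.mem_union.1 hp with hp' | hp' <;>
          rcases Finset.mem_union.1 hq with hq' | hq'
        · exact Or.inl ⟨hp', hq'⟩
        · exact absurd hpq (hinc p (hUs hp') q (hVt hq'))
        · exact absurd hpq.symm (hinc q (hUs hq') p (hVt hp'))
        · exact Or.inr ⟨hp', hq'⟩
      intro x hx y hy z hz hxy hyz
      rcases key x hx y hy hxy with ⟨hx', hy'⟩ | ⟨hx', hy'⟩ <;>
        rcases key y hy z hz hyz with ⟨hy'', hz'⟩ | ⟨hy'', hz'⟩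
      · exact hUcu x hx' y hy' z hz' hxy hyz
      · exact absurd hy'' (Finset.disjoint_left.1 hdisUV hy')
      · exact absurd hy' (Finset.disjoint_left.1 hdisUV hy'')
      · exact hVcu x hx' y hy' z hz' hxy hyz
    have := card_le_aoOn (Finset.union_subset_union hUs hVt) hcu
    rwa [Finset.card_union_of_disjoint hdisUV, hUcard, hVcard] at this

end AoOn

section Transport
variable {α β : Type*} [Fintype α] [PartialOrder α] [Fintype β] [PartialOrder β]

lemma isChainUnion_image (e : α ≃o β) {U : Finset α} (h : IsChainUnion U) :
    IsChainUnion (U.map e.toEquiv.toEmbedding) := by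
  intro x hx y hy z hz hxy hyz
  obtain ⟨u, hu, rfl⟩ := Finset.mem_map.1 hx
  obtain ⟨v, hv, rfl⟩ := Finset.mem_map.1 hy
  obtain ⟨w, hw, rfl⟩ := Finset.mem_map.1 hz
  simp only [Equiv.coe_toEmbedding, EquivLike.coe_coe] at *
  have h1 : u ≤ v ∨ v ≤ u := by
    rcases hxy with h' | h' <;> [left; right] <;> exact e.le_iff_le.1 h'
  have h2 : v ≤ w ∨ w ≤ v := by
    rcases hyz with h' | h' <;> [left; right] <;> exact e.le_iff_le.1 h'
  rcases h u hu v hv w hw h1 h2 with h' | h'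
  · exact Or.inl (e.le_iff_le.2 h')
  · exact Or.inr (e.le_iff_le.2 h')

lemma isChain_image (e : α ≃o β) {C : Finset α} (h : IsChain (· ≤ ·) (↑C : Set α)) :
    IsChain (· ≤ ·) (↑(C.map e.toEquiv.toEmbedding) : Set β) := by
  intro x hx y hy hxy
  simp only [Finset.coe_map, Set.mem_image, Finset.mem_coe, Equiv.coe_toEmbedding,
    EquivLike.coe_coe] at hx hy
  obtain ⟨u, hu, rfl⟩ := hx
  obtain ⟨v, hv, rfl⟩ := hy
  have huv : u ≠ v := fun h' => hxy (by rw [h'])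
  rcases h hu hv huv with h' | h'
  · exact Or.inl (e.le_iff_le.2 h')
  · exact Or.inr (e.le_iff_le.2 h')

lemma ao_le_of_orderIso (e : α ≃o β) : ao α ≤ ao β := by
  apply ao_le
  intro U hU
  have := card_le_ao (isChainUnion_image e hU)
  rwa [Finset.card_map] at this

lemma ao_congr_orderIso (e : α ≃o β) : ao α = ao β :=
  le_antisymm (ao_le_of_orderIso e) (ao_le_of_orderIso e.symm)

lemma heightP_le_of_orderIso (e : α ≃o β) : heightP α ≤ heightP β := by
  apply heightP_le
  intro C hC
  have := card_le_heightP (isChain_image e hC)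
  rwa [Finset.card_map] at this

lemma heightP_congr_orderIso (e : α ≃o β) : heightP α = heightP β :=
  le_antisymm (heightP_le_of_orderIso e) (heightP_le_of_orderIso e.symm)

lemma vFree_of_orderIso (e : α ≃o β) (h : VFree α) : VFree β := by
  rintro ⟨p1, p2, p3, h12, h13, hinc⟩
  refine h ⟨e.symm p1, e.symm p2, e.symm p3, ?_, ?_, ?_⟩
  · exact e.symm.strictMono h12
  · exact e.symm.strictMono h13
  · intro hc
    rcases hc with h' | h'
    · exact hinc (Or.inl (by simpa using e.symm.le_iff_le.1 h'))
    · exact hinc (Or.inr (by simpa using e.symm.le_iff_le.1 h'))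

/-- Transport a finite poset to one on `Fin n`. -/
lemma exists_fin_poset (α : Type*) [Fintype α] [PartialOrder α] :
    ∃ P : PartialOrder (Fin (Fintype.card α)),
      (@VFree _ P ↔ VFree α) ∧ @ao _ _ P = ao α ∧ @heightP _ _ P = heightP α := by
  let e : Fin (Fintype.card α) ≃ α := (Fintype.equivFin α).symm
  letI P : PartialOrder (Fin (Fintype.card α)) := PartialOrder.lift e e.injective
  letI LEI : LE (Fin (Fintype.card α)) := @Preorder.toLE _ (@PartialOrder.toPreorder _ P)
  have iso : @OrderIso (Fin (Fintype.card α)) α LEI _ :=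
    @RelIso.mk _ _ (fun a b => LEI.le a b) (fun a b => a ≤ b) e (fun {a b} => Iff.rfl)
  refine ⟨P, ?_, ?_, ?_⟩
  · exact ⟨fun h => @vFree_of_orderIso _ _ _ P _ _ iso h,
      fun h => @vFree_of_orderIso _ _ _ _ _ P (@OrderIso.symm _ _ LEI _ iso) h⟩
  · exact @ao_congr_orderIso _ _ _ P _ _ iso
  · exact @heightP_congr_orderIso _ _ _ P _ _ iso

end Transport

section SubtypeT
variable {α : Type*} [Fintype α] [PartialOrder α] [DecidableEq α]

lemma ao_subtype (s : Finset α) : ao {x : α // x ∈ s} = aoOn s := by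
  apply le_antisymm
  · apply ao_le
    intro V hV
    set f : {x : α // x ∈ s} ↪ α := Function.Embedding.subtype _
    have hsub : V.map f ⊆ s := by
      intro x hx
      obtain ⟨u, _, rfl⟩ := Finset.mem_map.1 hx
      exact u.2
    have hcu : IsChainUnion (V.map f) := by
      intro x hx y hy z hz hxy hyz
      obtain ⟨u, hu, rfl⟩ := Finset.mem_map.1 hx
      obtain ⟨v, hv, rfl⟩ := Finset.mem_map.1 hy
      obtain ⟨w, hw, rfl⟩ := Finset.mem_map.1 hz
      exact hV u hu v hv w hw hxy hyz
    have := card_le_aoOn hsub hcu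
    rwa [Finset.card_map] at this
  · apply aoOn_le
    intro U hUs hcu
    set V : Finset {x : α // x ∈ s} := U.subtype (· ∈ s)
    have hcard : V.card = U.card := by
      rw [Finset.card_subtype, Finset.filter_true_of_mem (fun x hx => hUs hx)]
    have hVcu : IsChainUnion V := by
      intro x hx y hy z hz hxy hyz
      simp only [V, Finset.mem_subtype] at hx hy hz
      exact hcu x.1 hx y.1 hy z.1 hz hxy hyz
    have := card_le_ao hVcu
    rwa [hcard] at this

lemma heightP_subtype_le (s : Finset α) (H : ℕ)
    (h : ∀ C : Finset α, C ⊆ s → IsChain (· ≤ ·) (↑C : Set α) → C.card ≤ H) :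
    heightP {x : α // x ∈ s} ≤ H := by
  apply heightP_le
  intro C hC
  set f : {x : α // x ∈ s} ↪ α := Function.Embedding.subtype _
  have hsub : C.map f ⊆ s := by
    intro x hx
    obtain ⟨u, _, rfl⟩ := Finset.mem_map.1 hx
    exact u.2
  have hch : IsChain (· ≤ ·) (↑(C.map f) : Set α) := by
    intro x hx y hy hxy
    simp only [Finset.coe_map, Set.mem_image, Finset.mem_coe] at hx hy
    obtain ⟨u, hu, rfl⟩ := hx
    obtain ⟨v, hv, rfl⟩ := hy
    have huv : u ≠ v := fun h' => hxy (by rw [h'])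
    exact hC hu hv huv
  have := h _ hsub hch
  rwa [Finset.card_map] at this

lemma vFree_subtype (s : Finset α) (h : VFree α) : VFree {x : α // x ∈ s} := by
  rintro ⟨p1, p2, p3, h12, h13, hinc⟩
  exact h ⟨p1.1, p2.1, p3.1, h12, h13, hinc⟩

end SubtypeT

section Mirsky
variable {α : Type*} [Fintype α] [PartialOrder α]

lemma antichain_isChainUnion {U : Finset α}
    (h : ∀ x ∈ U, ∀ y ∈ U, (x ≤ y ∨ y ≤ x) → x = y) : IsChainUnion U := by
  intro x hx y hy z hz hxy hyz
  rw [h x hx y hy hxy]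
  exact hyz

/-- The "level" of an element: max size of a chain below it. -/
noncomputable def phiP (x : α) : ℕ :=
  sSup {m | ∃ C : Finset α, IsChain (· ≤ ·) (↑C : Set α) ∧ (∀ y ∈ C, y ≤ x) ∧ C.card = m}

lemma phiPSet_nonempty (x : α) :
    {m | ∃ C : Finset α, IsChain (· ≤ ·) (↑C : Set α) ∧ (∀ y ∈ C, y ≤ x) ∧ C.card = m}.Nonempty :=
  ⟨0, ∅, by simp, by simp, Finset.card_empty⟩

lemma phiPSet_bddAbove (x : α) :
    BddAbove {m | ∃ C : Finset α, IsChain (· ≤ ·) (↑C : Set α) ∧ (∀ y ∈ C, y ≤ x) ∧ C.card = m} := by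
  refine ⟨Fintype.card α, ?_⟩
  rintro m ⟨C, _, _, rfl⟩
  exact Finset.card_le_univ C

lemma exists_phiP (x : α) : ∃ C : Finset α,
    IsChain (· ≤ ·) (↑C : Set α) ∧ (∀ y ∈ C, y ≤ x) ∧ C.card = phiP x :=
  Nat.sSup_mem (phiPSet_nonempty x) (phiPSet_bddAbove x)

lemma one_le_phiP (x : α) : 1 ≤ phiP x := by
  apply le_csSup (phiPSet_bddAbove x)
  exact ⟨{x}, by simp only [Finset.coe_singleton]; exact Set.Subsingleton.isChain (Set.subsingleton_singleton), by simp, Finset.card_singleton x⟩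

lemma phiP_le_heightP (x : α) : phiP x ≤ heightP α := by
  apply csSup_le (phiPSet_nonempty x)
  rintro m ⟨C, hC, _, rfl⟩
  exact card_le_heightP hC

lemma phiP_lt_of_lt {x y : α} (hxy : x < y) : phiP x < phiP y := by
  classical
  obtain ⟨C, hC, hle, hcard⟩ := exists_phiP x
  have hyC : y ∉ C := fun h => absurd (lt_of_lt_of_le hxy (hle y h)) (lt_irrefl x)
  have hchain : IsChain (· ≤ ·) (↑(insert y C) : Set α) := by
    intro u hu v hv huv
    simp only [Finset.coe_insert, Set.mem_insert_iff, Finset.mem_coe] at hu hv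
    rcases hu with rfl | hu
    · rcases hv with rfl | hv
      · exact absurd rfl huv
      · exact Or.inr ((hle v hv).trans hxy.le)
    · rcases hv with rfl | hv
      · exact Or.inl ((hle u hu).trans hxy.le)
      · exact hC hu hv huv
  have hle' : ∀ z ∈ insert y C, z ≤ y := by
    intro z hz
    rcases Finset.mem_insert.1 hz with rfl | hz
    · exact le_refl z
    · exact (hle z hz).trans hxy.le
  have : (insert y C).card ≤ phiP y :=
    le_csSup (phiPSet_bddAbove y) ⟨insert y C, hchain, hle', rfl⟩
  rw [Finset.card_insert_of_notMem hyC, hcard] at this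
  omega

lemma card_le_heightP_mul_ao : Fintype.card α ≤ heightP α * ao α := by
  classical
  have hsum : (Finset.univ : Finset α).card =
      ∑ v ∈ ((Finset.univ : Finset α).image phiP), ((Finset.univ : Finset α).filter (fun x => phiP x = v)).card :=
    Finset.card_eq_sum_card_image phiP Finset.univ
  have hfiber : ∀ v : ℕ, ((Finset.univ : Finset α).filter (fun x => phiP x = v)).card ≤ ao α := by
    intro v
    apply card_le_ao
    apply antichain_isChainUnion
    intro x hx y hy hxy
    simp only [Finset.mem_filter] at hx hy
    by_contra hne
    rcases hxy with h | h
    · have := phiP_lt_of_lt (lt_of_le_of_ne h hne)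
      omega
    · have := phiP_lt_of_lt (lt_of_le_of_ne h (Ne.symm hne))
      omega
  have himg : (((Finset.univ : Finset α).image phiP)).card ≤ heightP α := by
    have hsub : ((Finset.univ : Finset α).image phiP) ⊆ Finset.Icc 1 (heightP α) := by
      intro v hv
      obtain ⟨x, _, rfl⟩ := Finset.mem_image.1 hv
      exact Finset.mem_Icc.2 ⟨one_le_phiP x, phiP_le_heightP x⟩
    calc (((Finset.univ : Finset α).image phiP)).card ≤ (Finset.Icc 1 (heightP α)).card :=
          Finset.card_le_card hsub
      _ = heightP α := by rw [Nat.card_Icc]; omega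
  calc Fintype.card α
      = ∑ v ∈ ((Finset.univ : Finset α).image phiP), ((Finset.univ : Finset α).filter (fun x => phiP x = v)).card := by
        rw [← hsum, Finset.card_univ]
    _ ≤ (((Finset.univ : Finset α).image phiP)).card * ao α := by
        apply Finset.sum_le_card_nsmul
        intro v _
        exact hfiber v
    _ ≤ heightP α * ao α := Nat.mul_le_mul_right _ himg

lemma card_le_ao_sq : Fintype.card α ≤ ao α * ao α :=
  card_le_heightP_mul_ao.trans (Nat.mul_le_mul_right _ heightP_le_ao)

end Mirsky

section StepUp
variable {α : Type*} [Fintype α] [PartialOrder α]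

def topLE {α : Type*} [PartialOrder α] (x y : Option α) : Prop :=
  y = none ∨ ∃ a b : α, x = some a ∧ y = some b ∧ a ≤ b

/-- `Option α` ordered with `none` as a top element. -/
def topOrder (α : Type*) [PartialOrder α] : PartialOrder (Option α) where
  le := topLE
  lt x y := topLE x y ∧ ¬ topLE y x
  lt_iff_le_not_ge _ _ := Iff.rfl
  le_refl x := by
    cases x with
    | none => exact Or.inl rfl
    | some a => exact Or.inr ⟨a, a, rfl, rfl, le_refl a⟩
  le_trans x y z hxy hyz := by
    rcases hyz with rfl | ⟨b, c, rfl, rfl, hbc⟩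
    · exact Or.inl rfl
    · rcases hxy with h | ⟨a, b', rfl, hb, hab⟩
      · exact absurd h (by simp)
      · obtain rfl : b = b' := Option.some.inj hb
        exact Or.inr ⟨a, c, rfl, rfl, hab.trans hbc⟩
  le_antisymm x y hxy hyx := by
    rcases hxy with rfl | ⟨a, b, rfl, rfl, hab⟩
    · rcases hyx with rfl | ⟨a, b, h, hn, _⟩
      · rfl
      · simp at h
    · rcases hyx with h | ⟨a', b', ha', hb', h'⟩
      · exact absurd h (by simp)
      · obtain rfl : b = a' := Option.some.inj ha'
        obtain rfl : a = b' := Option.some.inj hb'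
        rw [le_antisymm hab h']

lemma topOrder_some_le_some {a b : α} :
    (topOrder α).le (some a) (some b) ↔ a ≤ b := by
  constructor
  · rintro (h | ⟨a', b', ha', hb', h'⟩)
    · exact absurd h (by simp)
    · obtain rfl : a = a' := Option.some.inj ha'
      obtain rfl : b = b' := Option.some.inj hb'
      exact h'
  · intro h; exact Or.inr ⟨a, b, rfl, rfl, h⟩

lemma topOrder_le_none {x : Option α} : (topOrder α).le x none := Or.inl rfl

lemma stepUp {a h : ℕ} (hv : VFree α) (hao : ao α = a) (hht : heightP α ≤ h)
    (hha : h < a) :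
    @VFree (Option α) (topOrder α) ∧ @ao (Option α) _ (topOrder α) = a ∧
      @heightP (Option α) _ (topOrder α) ≤ h + 1 := by
  classical
  letI Q := topOrder α
  have hheight : @heightP (Option α) _ Q ≤ h + 1 := by
    apply heightP_le
    intro C hC
    have hVchain : IsChain (· ≤ ·) (↑(Finset.eraseNone C) : Set α) := by
      intro u hu v hv huv
      simp only [Finset.mem_coe, Finset.mem_eraseNone] at hu hv
      rcases hC hu hv (fun h' => huv (by injection h')) with h' | h'
      · exact Or.inl (topOrder_some_le_some.1 h')
      · exact Or.inr (topOrder_some_le_some.1 h')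
    have h1 : (Finset.eraseNone C).card ≤ h := (card_le_heightP hVchain).trans hht
    have hcard : (Finset.eraseNone C).card = (C.erase none).card := by
      rw [← Finset.map_some_eraseNone C, Finset.card_map]
    have h2 : C.card ≤ (C.erase none).card + 1 := by
      by_cases hn : none ∈ C
      · have := Finset.card_erase_add_one hn
        omega
      · rw [Finset.erase_eq_of_notMem hn]
        omega
    omega
  refine ⟨?_, ?_, hheight⟩
  · rintro ⟨p1, p2, p3, h12, h13, hinc⟩
    rcases Option.eq_none_or_eq_some p2 with rfl | ⟨b2, rfl⟩
    · exact hinc (Or.inr topOrder_le_none)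
    rcases Option.eq_none_or_eq_some p3 with rfl | ⟨b3, rfl⟩
    · exact hinc (Or.inl topOrder_le_none)
    rcases h12.le with h' | ⟨a1, b2', ha1, hb2, hle⟩
    · exact absurd h' (by simp)
    obtain rfl : b2 = b2' := Option.some.inj hb2
    subst ha1
    rcases h13.le with h' | ⟨a1', b3', ha1', hb3, hle'⟩
    · exact absurd h' (by simp)
    obtain rfl : a1 = a1' := Option.some.inj ha1'
    obtain rfl : b3 = b3' := Option.some.inj hb3
    have hlt12 : a1 < b2 := lt_of_le_of_ne hle (fun h' => h12.ne (by rw [h']))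
    have hlt13 : a1 < b3 := lt_of_le_of_ne hle' (fun h' => h13.ne (by rw [h']))
    refine hv ⟨a1, b2, b3, hlt12, hlt13, ?_⟩
    rintro (h' | h')
    · exact hinc (Or.inl (topOrder_some_le_some.2 h'))
    · exact hinc (Or.inr (topOrder_some_le_some.2 h'))
  · apply le_antisymm
    · apply ao_le
      intro U hU
      by_cases hn : none ∈ U
      · have hchain : IsChain (fun x y : Option α => Q.le x y) (↑U : Set (Option α)) := by
          intro x hx y hy hxy
          exact hU x hx none hn y hy (Or.inl topOrder_le_none) (Or.inr topOrder_le_none)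
        have := @card_le_heightP (Option α) _ Q U hchain
        omega
      · have hVcu : IsChainUnion (Finset.eraseNone U) := by
          intro x hx y hy z hz hxy hyz
          simp only [Finset.mem_eraseNone] at hx hy hz
          have h1 : Q.le (some x) (some y) ∨ Q.le (some y) (some x) := by
            rcases hxy with h' | h'
            · exact Or.inl (topOrder_some_le_some.2 h')
            · exact Or.inr (topOrder_some_le_some.2 h')
          have h2 : Q.le (some y) (some z) ∨ Q.le (some z) (some y) := by
            rcases hyz with h' | h'
            · exact Or.inl (topOrder_some_le_some.2 h')
            · exact Or.inr (topOrder_some_le_some.2 h')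
          rcases hU (some x) hx (some y) hy (some z) hz h1 h2 with h' | h'
          · exact Or.inl (topOrder_some_le_some.1 h')
          · exact Or.inr (topOrder_some_le_some.1 h')
        have h1 : (Finset.eraseNone U).card ≤ a := by rw [← hao]; exact card_le_ao hVcu
        have h2 : U.card = (Finset.eraseNone U).card := by
          conv_lhs => rw [← Finset.erase_eq_of_notMem hn, ← Finset.map_some_eraseNone U]
          rw [Finset.card_map]
        omega
    · rw [← hao]
      apply ao_le
      intro U hU
      have hcu : IsChainUnion (U.map Function.Embedding.some : Finset (Option α)) := by
        intro x hx y hy z hz hxy hyz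
        obtain ⟨u, hu, rfl⟩ := Finset.mem_map.1 hx
        obtain ⟨v, hv, rfl⟩ := Finset.mem_map.1 hy
        obtain ⟨w, hw, rfl⟩ := Finset.mem_map.1 hz
        simp only [Function.Embedding.some_apply] at *
        have h1 : u ≤ v ∨ v ≤ u := by
          rcases hxy with h' | h' <;> [left; right] <;> exact topOrder_some_le_some.1 h'
        have h2 : v ≤ w ∨ w ≤ v := by
          rcases hyz with h' | h' <;> [left; right] <;> exact topOrder_some_le_some.1 h'
        rcases hU u hu v hv w hw h1 h2 with h' | h'
        · exact Or.inl (topOrder_some_le_some.2 h')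
        · exact Or.inr (topOrder_some_le_some.2 h')
      have := @card_le_ao (Option α) _ Q _ hcu
      rwa [Finset.card_map] at this

end StepUp

section Detach
variable {α : Type*} [PartialOrder α]

def detLE (r x y : α) : Prop := x = y ∨ (x ≤ y ∧ x ≠ r ∧ y ≠ r)

/-- The order obtained by making `r` incomparable to everything else. -/
def detachOrder (r : α) : PartialOrder α where
  le := detLE r
  lt x y := detLE r x y ∧ ¬ detLE r y x
  lt_iff_le_not_ge _ _ := Iff.rfl
  le_refl x := Or.inl rfl
  le_trans x y z hxy hyz := by
    rcases hxy with rfl | ⟨h1, hx, hy⟩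
    · exact hyz
    · rcases hyz with rfl | ⟨h2, _, hz⟩
      · exact Or.inr ⟨h1, hx, hy⟩
      · exact Or.inr ⟨h1.trans h2, hx, hz⟩
  le_antisymm x y hxy hyx := by
    rcases hxy with rfl | ⟨h1, _, _⟩
    · rfl
    · rcases hyx with rfl | ⟨h2, _, _⟩
      · rfl
      · exact le_antisymm h1 h2

lemma detachOrder_le_r_iff {r x y : α} (h : (detachOrder r).le x y) (hr : x = r ∨ y = r) :
    x = y := by
  rcases h with rfl | ⟨_, hx, hy⟩
  · rfl
  · rcases hr with rfl | rfl
    · exact absurd rfl hx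
    · exact absurd rfl hy

lemma detachOrder_comp_iff {r x y : α} (hx : x ≠ r) (hy : y ≠ r) :
    ((detachOrder r).le x y ∨ (detachOrder r).le y x) ↔ (x ≤ y ∨ y ≤ x) := by
  constructor
  · rintro (h | h)
    · rcases h with rfl | ⟨h', _⟩
      · exact Or.inl le_rfl
      · exact Or.inl h'
    · rcases h with rfl | ⟨h', _⟩
      · exact Or.inl le_rfl
      · exact Or.inr h'
  · rintro (h | h)
    · exact Or.inl (Or.inr ⟨h, hx, hy⟩)
    · exact Or.inr (Or.inr ⟨h, hy, hx⟩)

end Detach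

section Surgery
variable {α : Type*} [Fintype α] [PartialOrder α]

lemma singleton_isChainUnion (x : α) : IsChainUnion ({x} : Finset α) := by
  intro u hu v hv w hw _ h2
  simp only [Finset.mem_singleton] at hu hv hw
  subst hu; subst hv; subst hw
  exact h2

lemma chain_top {C' : Finset α} (hch : IsChain (· ≤ ·) (↑C' : Set α)) (hne : C'.Nonempty) :
    ∃ m ∈ C', ∀ y ∈ C', y ≤ m := by
  obtain ⟨m, hm, hmax⟩ := C'.exists_maximal hne
  refine ⟨m, hm, fun y hy => ?_⟩
  by_cases hym : y = m
  · exact hym.le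
  rcases hch hy hm hym with h | h
  · exact h
  · exact hmax hy h

universe uu

lemma surgery {α : Type uu} [Fintype α] [PartialOrder α] {a g : ℕ}
    (hv : VFree α) (hao : ao α = a) (hht : heightP α = g)
    (hg : 2 ≤ g) (ha2 : a ≤ 2 * (g - 1)) :
    ∃ (β : Type uu) (_ : Fintype β) (P : PartialOrder β), @VFree β P ∧ @ao β _ P = a ∧
      @heightP β _ P ≤ g - 1 ∧ Fintype.card α ≤ Fintype.card β + 1 := by
  classical
  obtain ⟨C, hCchain, hCcard⟩ := exists_heightP (α := α)
  rw [hht] at hCcard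
  have hCne : C.Nonempty := Finset.card_pos.1 (by omega)
  obtain ⟨r, hrC, hCtop⟩ := chain_top hCchain hCne
  -- r is maximal in α
  have hrmax : ∀ y, r ≤ y → y = r := by
    intro y hy
    by_contra hne
    have hlt : r < y := lt_of_le_of_ne hy (fun h => hne h.symm)
    have hyC : y ∉ C := fun h => absurd (lt_of_lt_of_le hlt (hCtop y h)) (lt_irrefl r)
    have hchain : IsChain (· ≤ ·) (↑(insert y C) : Set α) := by
      intro u hu v hv huv
      simp only [Finset.coe_insert, Set.mem_insert_iff, Finset.mem_coe] at hu hv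
      rcases hu with rfl | hu
      · rcases hv with rfl | hv
        · exact absurd rfl huv
        · exact Or.inr ((hCtop v hv).trans hlt.le)
      · rcases hv with rfl | hv
        · exact Or.inl ((hCtop u hu).trans hlt.le)
        · exact hCchain hu hv huv
    have := card_le_heightP hchain
    rw [Finset.card_insert_of_notMem hyC, hht] at this
    omega
  set D : Finset α := Finset.univ.filter (· ≤ r) with hD
  have hmemD : ∀ x, x ∈ D ↔ x ≤ r := by
    intro x; simp [hD]
  have hrD : r ∈ D := (hmemD r).2 le_rfl
  -- K1 : full incomparability between D and its complement
  have hK1 : ∀ x ∈ D, ∀ y, y ∉ D → ¬(x ≤ y ∨ y ≤ x) := by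
    intro x hx y hy hc
    have hxr : x ≤ r := (hmemD x).1 hx
    have hyr : ¬ y ≤ r := fun h => hy ((hmemD y).2 h)
    rcases hc with h | h
    · by_cases hxr' : x = r
      · subst hxr'
        exact hyr ((hrmax y h).le)
      · have hxy : x ≠ y := fun hh => hy ((hmemD y).2 (hh ▸ hxr))
        have h1 : x < y := lt_of_le_of_ne h hxy
        have h2 : x < r := lt_of_le_of_ne hxr hxr'
        refine hv ⟨x, y, r, h1, h2, ?_⟩
        rintro (h' | h')
        · exact hyr h'
        · exact hyr ((hrmax y h').le)
    · exact hyr (h.trans hxr)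
  -- no long chain avoiding r
  have hNoTall : ∀ C' : Finset α, IsChain (· ≤ ·) (↑C' : Set α) → r ∉ C' →
      C'.card ≤ g - 1 := by
    intro C' hch hrC'
    by_contra hcon
    have hcard' : C'.card = g := by
      have := card_le_heightP hch
      rw [hht] at this
      omega
    have hC'ne : C'.Nonempty := Finset.card_pos.1 (by omega)
    obtain ⟨r2, hr2C', hC'top⟩ := chain_top hch hC'ne
    have hr2max : ∀ y, r2 ≤ y → y = r2 := by
      intro y hy
      by_contra hne
      have hlt : r2 < y := lt_of_le_of_ne hy (fun h => hne h.symm)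
      have hyC : y ∉ C' := fun h => absurd (lt_of_lt_of_le hlt (hC'top y h)) (lt_irrefl r2)
      have hchain : IsChain (· ≤ ·) (↑(insert y C') : Set α) := by
        intro u hu v hv huv
        simp only [Finset.coe_insert, Set.mem_insert_iff, Finset.mem_coe] at hu hv
        rcases hu with rfl | hu
        · rcases hv with rfl | hv
          · exact absurd rfl huv
          · exact Or.inr ((hC'top v hv).trans hlt.le)
        · rcases hv with rfl | hv
          · exact Or.inl ((hC'top u hu).trans hlt.le)
          · exact hch hu hv huv
      have := card_le_heightP hchain
      rw [Finset.card_insert_of_notMem hyC, hht] at this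
      omega
    -- C' is disjoint from D
    have hC'D : ∀ x ∈ C', x ∉ D := by
      intro x hx
      by_cases hxall : ∀ z ∈ C', z ∈ D
      · -- C' ⊆ D : insert r C' is a chain of size g+1
        exfalso
        have hchain : IsChain (· ≤ ·) (↑(insert r C') : Set α) := by
          intro u hu v hv huv
          simp only [Finset.coe_insert, Set.mem_insert_iff, Finset.mem_coe] at hu hv
          rcases hu with rfl | hu
          · rcases hv with rfl | hv
            · exact absurd rfl huv
            · exact Or.inr ((hmemD v).1 (hxall v hv))
          · rcases hv with rfl | hv
            · exact Or.inl ((hmemD u).1 (hxall u hu))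
            · exact hch hu hv huv
        have := card_le_heightP hchain
        rw [Finset.card_insert_of_notMem hrC', hht] at this
        omega
      · push_neg at hxall
        obtain ⟨y0, hy0, hy0D⟩ := hxall
        intro hxD
        have hxy0 : x ≠ y0 := fun h => hy0D (h ▸ hxD)
        exact hK1 x hxD y0 hy0D (hch hx hy0 hxy0)
    -- second tall down-set
    set D2 : Finset α := Finset.univ.filter (· ≤ r2) with hD2
    have hmemD2 : ∀ x, x ∈ D2 ↔ x ≤ r2 := by intro x; simp [hD2]
    have hr2D : r2 ∉ D := hC'D r2 hr2C'
    have hdis : Disjoint D D2 := by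
      rw [Finset.disjoint_left]
      intro x hxD hxD2
      have hx1 : x ≤ r := (hmemD x).1 hxD
      have hx2 : x ≤ r2 := (hmemD2 x).1 hxD2
      by_cases hxr : x = r
      · subst hxr
        exact hr2D ((hmemD r2).2 ((hrmax r2 hx2).symm ▸ le_rfl))
      by_cases hxr2 : x = r2
      · subst hxr2
        exact hr2D hxD
      have h1 : x < r := lt_of_le_of_ne hx1 hxr
      have h2 : x < r2 := lt_of_le_of_ne hx2 hxr2
      refine hv ⟨x, r, r2, h1, h2, ?_⟩
      rintro (h' | h')
      · exact hr2D ((hmemD r2).2 ((hrmax r2 h').symm ▸ le_rfl))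
      · exact hr2D ((hmemD r2).2 h')
    have hinc2 : ∀ x ∈ D, ∀ y ∈ D2, ¬(x ≤ y ∨ y ≤ x) := by
      rintro x hx y hy (h | h)
      · exact Finset.disjoint_left.1 hdis hx ((hmemD2 x).2 (h.trans ((hmemD2 y).1 hy)))
      · exact Finset.disjoint_left.1 hdis ((hmemD y).2 (h.trans ((hmemD x).1 hx))) hy
    have hCD : C ⊆ D := fun x hx => (hmemD x).2 (hCtop x hx)
    have hC'D2 : C' ⊆ D2 := fun x hx => (hmemD2 x).2 (hC'top x hx)
    have hbig : 2 * g ≤ a := by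
      have h1 : g ≤ aoOn D := by
        have := card_le_aoOn hCD hCchain.isChainUnion
        omega
      have h2 : g ≤ aoOn D2 := by
        have := card_le_aoOn hC'D2 hch.isChainUnion
        omega
      have h3 : aoOn (D ∪ D2) = aoOn D + aoOn D2 := aoOn_union_incomp hdis hinc2
      have h4 : aoOn (D ∪ D2) ≤ ao α := by
        rw [ao_eq_aoOn_univ]
        exact aoOn_mono (Finset.subset_univ _)
      omega
    omega
  -- chain-unions in D containing r are chains
  have hchainD : ∀ U : Finset α, U ⊆ D → IsChainUnion U → r ∈ U →
      IsChain (· ≤ ·) (↑U : Set α) := by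
    intro U hUD hcu hrU x hx y hy hxy
    exact hcu x hx r hrU y hy (Or.inl ((hmemD x).1 (hUD hx)))
      (Or.inr ((hmemD y).1 (hUD hy)))
  set σ := aoOn (D.erase r) with hσ
  have hσ_ge : g - 1 ≤ σ := by
    have hsub : C.erase r ⊆ D.erase r := Finset.erase_subset_erase r
      (fun x hx => (hmemD x).2 (hCtop x hx))
    have hchain : IsChain (· ≤ ·) (↑(C.erase r) : Set α) :=
      hCchain.mono (fun x hx => Finset.mem_of_mem_erase hx)
    have := card_le_aoOn hsub hchain.isChainUnion
    rw [Finset.card_erase_of_mem hrC, hCcard] at this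
    exact this
  have hDsplit : a = aoOn D + aoOn (Finset.univ \ D) := by
    have hdis : Disjoint D (Finset.univ \ D) := Finset.disjoint_sdiff
    have hun : D ∪ (Finset.univ \ D) = Finset.univ :=
      Finset.union_sdiff_of_subset (Finset.subset_univ D)
    have hinc : ∀ x ∈ D, ∀ y ∈ Finset.univ \ D, ¬(x ≤ y ∨ y ≤ x) := by
      intro x hx y hy
      exact hK1 x hx y (Finset.mem_sdiff.1 hy).2
    rw [← hao, ao_eq_aoOn_univ]
    conv_lhs => rw [← hun]
    exact aoOn_union_incomp hdis hinc
  have herase_split : aoOn (Finset.univ.erase r) = σ + aoOn (Finset.univ \ D) := by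
    have hun : Finset.univ.erase r = (D.erase r) ∪ (Finset.univ \ D) := by
      ext x
      simp only [Finset.mem_erase, Finset.mem_union, Finset.mem_sdiff, Finset.mem_univ,
        true_and, and_true]
      constructor
      · intro hx
        by_cases hxD : x ∈ D
        · exact Or.inl ⟨hx, hxD⟩
        · exact Or.inr hxD
      · rintro (⟨hx, _⟩ | hx)
        · exact hx
        · intro hxr
          exact hx (hxr ▸ hrD)
    have hdis : Disjoint (D.erase r) (Finset.univ \ D) :=
      Finset.disjoint_sdiff.mono_left (Finset.erase_subset r D)
    have hinc : ∀ x ∈ D.erase r, ∀ y ∈ Finset.univ \ D, ¬(x ≤ y ∨ y ≤ x) := by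
      intro x hx y hy
      exact hK1 x (Finset.mem_of_mem_erase hx) y (Finset.mem_sdiff.1 hy).2
    rw [hun, aoOn_union_incomp hdis hinc]
  by_cases hcase : g ≤ σ
  · -- Case A : delete r
    have haoD : aoOn D = σ := by
      apply le_antisymm
      · apply aoOn_le
        intro U hUD hcu
        by_cases hrU : r ∈ U
        · have := card_le_heightP (hchainD U hUD hcu hrU)
          rw [hht] at this
          omega
        · exact card_le_aoOn (fun x hx => Finset.mem_erase.2
            ⟨fun h => hrU (by subst h; exact hx), hUD hx⟩) hcu
      · exact aoOn_mono (Finset.erase_subset r D)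
    have haoE : aoOn (Finset.univ.erase r) = a := by
      rw [herase_split, ← haoD]
      omega
    refine ⟨{x : α // x ∈ Finset.univ.erase r}, inferInstance, inferInstance,
      vFree_subtype _ hv, ?_, ?_, ?_⟩
    · exact (ao_subtype _).trans haoE
    · apply heightP_subtype_le
      intro C' hC'sub hC'chain
      apply hNoTall C' hC'chain
      intro hrC'
      exact (Finset.mem_erase.1 (hC'sub hrC')).1 rfl
    · rw [Fintype.card_coe, Finset.card_erase_of_mem (Finset.mem_univ r),
        ← Finset.card_univ]
      have : 0 < Finset.univ.card := Finset.card_pos.2 ⟨r, Finset.mem_univ r⟩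
      rw [Finset.card_univ] at *
      omega
  · -- Case B : detach r
    push_neg at hcase
    have hσeq : σ = g - 1 := by omega
    have haoD : aoOn D = g := by
      apply le_antisymm
      · apply aoOn_le
        intro U hUD hcu
        by_cases hrU : r ∈ U
        · have := card_le_heightP (hchainD U hUD hcu hrU)
          rw [hht] at this
          exact this
        · have := card_le_aoOn (fun x hx => Finset.mem_erase.2
            ⟨fun h => hrU (by subst h; exact hx), hUD hx⟩) hcu
          omega
      · have hCD : C ⊆ D := fun x hx => (hmemD x).2 (hCtop x hx)
        have := card_le_aoOn hCD hCchain.isChainUnion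
        omega
    refine ⟨α, inferInstance, detachOrder r, ?_, ?_, ?_, Nat.le_succ _⟩
    · -- VFree
      rintro ⟨p1, p2, p3, h12, h13, hinc⟩
      have h12' : detLE r p1 p2 ∧ ¬ detLE r p2 p1 := h12
      have h13' : detLE r p1 p3 ∧ ¬ detLE r p3 p1 := h13
      have H12 : p1 < p2 ∧ p1 ≠ r ∧ p2 ≠ r := by
        obtain ⟨hle, hnle⟩ := h12'
        rcases hle with rfl | ⟨h', h1, h2⟩
        · exact absurd (Or.inl rfl) hnle
        · exact ⟨lt_of_le_of_ne h' (fun hh => hnle (Or.inl hh.symm)), h1, h2⟩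
      have H13 : p1 < p3 ∧ p1 ≠ r ∧ p3 ≠ r := by
        obtain ⟨hle, hnle⟩ := h13'
        rcases hle with rfl | ⟨h', h1, h2⟩
        · exact absurd (Or.inl rfl) hnle
        · exact ⟨lt_of_le_of_ne h' (fun hh => hnle (Or.inl hh.symm)), h1, h2⟩
      refine hv ⟨p1, p2, p3, H12.1, H13.1, ?_⟩
      intro hc
      exact hinc ((detachOrder_comp_iff H12.2.2 H13.2.2).2 hc)
    · -- ao = a
      have goal1 : @ao α _ (detachOrder r) =
          @aoOn α (detachOrder r) (Finset.univ : Finset α) :=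
        @ao_eq_aoOn_univ α _ (detachOrder r) (Classical.decEq α)
      have hun : (Finset.univ : Finset α) = {r} ∪ Finset.univ.erase r := by
        ext x
        simp only [Finset.mem_union, Finset.mem_singleton, Finset.mem_erase,
          Finset.mem_univ, and_true, true_iff]
        by_cases hxr : x = r
        · exact Or.inl hxr
        · exact Or.inr hxr
      have hdis : Disjoint ({r} : Finset α) (Finset.univ.erase r) := by
        simp [Finset.disjoint_left]
      have hinc : ∀ x ∈ ({r} : Finset α), ∀ y ∈ Finset.univ.erase r,
          ¬((detachOrder r).le x y ∨ (detachOrder r).le y x) := by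
        intro x hx y hy hc
        rw [Finset.mem_singleton] at hx
        have hyr : y ≠ r := (Finset.mem_erase.1 hy).1
        rcases hc with h' | h'
        · exact hyr ((detachOrder_le_r_iff h' (Or.inl hx)).symm.trans hx)
        · exact hyr ((detachOrder_le_r_iff h' (Or.inr hx)).trans hx)
      have goal2 : @aoOn α (detachOrder r) ({r} ∪ Finset.univ.erase r) =
          @aoOn α (detachOrder r) {r} + @aoOn α (detachOrder r) (Finset.univ.erase r) :=
        @aoOn_union_incomp α _ (detachOrder r) (Classical.decEq α) _ _ hdis hinc
      have h1 : @aoOn α (detachOrder r) {r} = 1 := by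
        apply le_antisymm
        · apply @aoOn_le α _ (detachOrder r)
          intro U hU _
          calc U.card ≤ ({r} : Finset α).card := Finset.card_le_card hU
            _ = 1 := Finset.card_singleton r
        · have := @card_le_aoOn α _ (detachOrder r) (Classical.decEq α) {r} {r} (le_refl _)
            (@singleton_isChainUnion α _ (detachOrder r) r)
          simpa using this
      have h2 : @aoOn α (detachOrder r) (Finset.univ.erase r) =
          aoOn (Finset.univ.erase r) := by
        have hset : {m | ∃ U ⊆ Finset.univ.erase r, @IsChainUnion α (detachOrder r) U ∧
              U.card = m} =
            {m | ∃ U ⊆ Finset.univ.erase r, IsChainUnion U ∧ U.card = m} := by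
          ext m
          constructor
          · rintro ⟨U, hU, hcu, rfl⟩
            refine ⟨U, hU, ?_, rfl⟩
            intro x hx y hy z hz hxy hyz
            have hxr := (Finset.mem_erase.1 (hU hx)).1
            have hyr := (Finset.mem_erase.1 (hU hy)).1
            have hzr := (Finset.mem_erase.1 (hU hz)).1
            exact (detachOrder_comp_iff hxr hzr).1
              (hcu x hx y hy z hz ((detachOrder_comp_iff hxr hyr).2 hxy)
                ((detachOrder_comp_iff hyr hzr).2 hyz))
          · rintro ⟨U, hU, hcu, rfl⟩
            refine ⟨U, hU, ?_, rfl⟩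
            intro x hx y hy z hz hxy hyz
            have hxr := (Finset.mem_erase.1 (hU hx)).1
            have hyr := (Finset.mem_erase.1 (hU hy)).1
            have hzr := (Finset.mem_erase.1 (hU hz)).1
            exact (detachOrder_comp_iff hxr hzr).2
              (hcu x hx y hy z hz ((detachOrder_comp_iff hxr hyr).1 hxy)
                ((detachOrder_comp_iff hyr hzr).1 hyz))
        show sSup _ = sSup _
        rw [hset]
      rw [goal1]
      conv_lhs => rw [hun]
      rw [goal2, h1, h2, herase_split, hσeq]
      omega
    · -- height ≤ g - 1
      apply @heightP_le α _ (detachOrder r)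
      intro C' hC'
      by_cases hrC' : r ∈ C'
      · have hsub : C' ⊆ {r} := by
          intro y hy
          rw [Finset.mem_singleton]
          by_contra hyr
          rcases hC' hy hrC' hyr with h' | h'
          · exact hyr (detachOrder_le_r_iff h' (Or.inr rfl))
          · exact hyr (detachOrder_le_r_iff h' (Or.inl rfl)).symm
        have := Finset.card_le_card hsub
        simp only [Finset.card_singleton] at this
        omega
      · apply hNoTall C' _ hrC'
        intro x hx y hy hxy
        have hxr : x ≠ r := fun h => hrC' (h ▸ hx)
        have hyr : y ≠ r := fun h => hrC' (h ▸ hy)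
        rcases hC' hx hy hxy with h' | h'
        · have h'' : detLE r x y := h'
          rcases h'' with h'' | ⟨h'', _⟩
          · exact absurd h'' hxy
          · exact Or.inl h''
        · have h'' : detLE r y x := h'
          rcases h'' with h'' | ⟨h'', _⟩
          · exact absurd h''.symm hxy
          · exact Or.inr h''

end Surgery


section Assemble

def LamSet (a h : ℕ) : Set ℕ :=
  {n | ∃ P : PartialOrder (Fin n), @VFree (Fin n) P ∧
    @ao (Fin n) (Fin.fintype n) P = a ∧ @heightP (Fin n) (Fin.fintype n) P ≤ h}

lemma Lam_eq (a h : ℕ) : Lam a h = sSup (LamSet a h) := rfl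

lemma LamSet_bddAbove (a h : ℕ) : BddAbove (LamSet a h) := by
  refine ⟨a * a, ?_⟩
  rintro n ⟨P, hv, hao, hht⟩
  have := @card_le_ao_sq (Fin n) (Fin.fintype n) P
  rw [hao, Fintype.card_fin] at this
  exact this

lemma mem_LamSet {a h : ℕ} (α : Type) [Fintype α] [PartialOrder α]
    (hv : VFree α) (hao : ao α = a) (hht : heightP α ≤ h) :
    Fintype.card α ∈ LamSet a h := by
  obtain ⟨P, hP1, hP2, hP3⟩ := exists_fin_poset α
  exact ⟨P, hP1.2 hv, by rw [hP2, hao], by rw [hP3]; exact hht⟩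

lemma step_mem {a h n : ℕ} (hn : n ∈ LamSet a h) (hha : h < a) :
    (n + 1) ∈ LamSet a (h + 1) := by
  obtain ⟨P, hv, hao, hht⟩ := hn
  obtain ⟨hV, hA, hH⟩ := @stepUp (Fin n) (Fin.fintype n) P a h hv hao hht hha
  have hmem := @mem_LamSet a (h + 1) (Option (Fin n)) _ (topOrder _) hV hA hH
  have hc : Fintype.card (Option (Fin n)) = n + 1 := by
    rw [Fintype.card_option, Fintype.card_fin]
  rwa [hc] at hmem

lemma iter_mem {a h n : ℕ} (hn : n ∈ LamSet a h) :
    ∀ k, h + k ≤ a → (n + k) ∈ LamSet a (h + k) := by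
  intro k
  induction k with
  | zero => intro _; simpa using hn
  | succ k ih =>
    intro hk
    have h1 := ih (by omega)
    have h2 := step_mem h1 (by omega)
    have : n + (k + 1) = n + k + 1 := by omega
    rw [this, show h + (k + 1) = h + k + 1 by omega]
    exact h2

/-- The trivial (discrete) order. -/
def discOrder (β : Type) : PartialOrder β where
  le x y := x = y
  lt x y := x = y ∧ ¬ y = x
  lt_iff_le_not_ge _ _ := Iff.rfl
  le_refl _ := rfl
  le_trans _ _ _ h1 h2 := by exact Eq.trans h1 h2
  le_antisymm _ _ h1 _ := by exact h1

lemma antichain_mem (a : ℕ) (ha : 1 ≤ a) : a ∈ LamSet a a := by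
  have h1 : @VFree (Fin a) (discOrder (Fin a)) := by
    rintro ⟨p1, p2, p3, h12, _, _⟩
    have : (p1 = p2 ∧ ¬ p2 = p1) := h12
    exact this.2 this.1.symm
  have h2 : @ao (Fin a) (Fin.fintype a) (discOrder (Fin a)) = a := by
    apply le_antisymm
    · apply @ao_le (Fin a) (Fin.fintype a) (discOrder (Fin a))
      intro U _
      calc U.card ≤ Fintype.card (Fin a) := Finset.card_le_univ U
        _ = a := Fintype.card_fin a
    · have hcu : @IsChainUnion (Fin a) (discOrder (Fin a)) Finset.univ := by
        intro x _ y _ z _ hxy hyz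
        have hxy' : x = y ∨ y = x := hxy
        have : x = y := by rcases hxy' with h | h; exact h; exact h.symm
        subst this
        exact hyz
      have := @card_le_ao (Fin a) (Fin.fintype a) (discOrder (Fin a)) _ hcu
      rwa [Finset.card_univ, Fintype.card_fin] at this
  have h3 : @heightP (Fin a) (Fin.fintype a) (discOrder (Fin a)) ≤ a := by
    apply @heightP_le (Fin a) (Fin.fintype a) (discOrder (Fin a))
    intro C _
    calc C.card ≤ Fintype.card (Fin a) := Finset.card_le_univ C
      _ = a := Fintype.card_fin a
  exact ⟨discOrder (Fin a), h1, h2, h3⟩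

lemma reduce (a h : ℕ) (hh1 : 1 ≤ h) (hha : a ≤ 2 * h) :
    ∀ g n : ℕ, h ≤ g → n ∈ LamSet a g →
      ∃ n', n + h ≤ n' + g ∧ n' ∈ LamSet a h := by
  intro g
  induction g using Nat.strong_induction_on with
  | _ g ih =>
    rintro n hg ⟨P, hv, hao, hht⟩
    by_cases hle : @heightP (Fin n) (Fin.fintype n) P ≤ h
    · exact ⟨n, by omega, ⟨P, hv, hao, hle⟩⟩
    · push_neg at hle
      set g0 := @heightP (Fin n) (Fin.fintype n) P with hg0
      have hg02 : 2 ≤ g0 := by omega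
      have ha2 : a ≤ 2 * (g0 - 1) := by omega
      obtain ⟨β, hFβ, Pβ, hvβ, haoβ, hhβ, hcardβ⟩ :=
        @surgery (Fin n) (Fin.fintype n) P a g0 hv hao rfl hg02 ha2
      have hmem : @Fintype.card β hFβ ∈ LamSet a (g0 - 1) := by
        obtain ⟨P', hP1, hP2, hP3⟩ := @exists_fin_poset β hFβ Pβ
        exact ⟨P', hP1.2 hvβ, by rw [hP2, haoβ], by rw [hP3]; exact hhβ⟩
      have hlt : g0 - 1 < g := by omega
      have hge : h ≤ g0 - 1 := by omega
      obtain ⟨n', hn'1, hn'2⟩ := ih (g0 - 1) hlt (@Fintype.card β hFβ) hge hmem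
      refine ⟨n', ?_, hn'2⟩
      have hn : n = Fintype.card (Fin n) := (Fintype.card_fin n).symm
      rw [Fintype.card_fin] at hcardβ
      omega


/-- for `a ≥ 2` and `0 ≤ h ≤ a`, `Λ(a,h) ≤ Λ(a) − (a−h)`, with equality
when `a/2 ≤ h ≤ a`. -/
theorem Lam_le_Lambda_sub (a h : ℕ) (ha : 2 ≤ a) (hh : h ≤ a) :
    Lam a h ≤ Lambda a - (a - h) ∧ (a ≤ 2 * h → Lam a h = Lambda a - (a - h)) := by
  have hbddh := LamSet_bddAbove a h
  have hbdda := LamSet_bddAbove a a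
  have hA : a ≤ Lambda a := le_csSup hbdda (antichain_mem a (by omega))
  have hup : Lam a h + (a - h) ≤ Lambda a := by
    by_cases hne : (LamSet a h).Nonempty
    · have hmem : Lam a h ∈ LamSet a h := Nat.sSup_mem hne hbddh
      have hiter := iter_mem hmem (a - h) (by omega)
      rw [show h + (a - h) = a by omega] at hiter
      exact le_csSup hbdda hiter
    · rw [Set.not_nonempty_iff_eq_empty] at hne
      rw [Lam_eq, hne, csSup_empty]
      simpa using (by omega : a - h ≤ Lambda a)
  refine ⟨by omega, fun h2a => ?_⟩
  have hh1 : 1 ≤ h := by omega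
  have hNmem : Lambda a ∈ LamSet a a :=
    Nat.sSup_mem ⟨a, antichain_mem a (by omega)⟩ hbdda
  obtain ⟨n', hn'1, hn'2⟩ := reduce a h hh1 h2a a (Lambda a) hh hNmem
  have hle' : n' ≤ Lam a h := le_csSup hbddh hn'2
  omega
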